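/- Define d_{n,k} = Σ_{i=2k}^{n} (n-i+1)·C(n-k+1, i-2k). Then for all positive integers n, k with n ≥ 2k+1: 2k(n-k)·d_{n-1,k+1} = (4n² + (4-13k)n + 11k² - 5k)·d_{n-1,k} - (2n² - 7nk + 6k²)·d_{n,k}. -/

import Mathlib

open Finset

/-- `d n k = Σ_{i=2k}^{n} (n-i+1)·C(n-k+1, i-2k)`. -/
def d (n k : ℕ) : ℕ :=
  ∑ i ∈ Finset.Icc (2 * k) n, (n - i + 1) * Nat.choose (n - k + 1) (i - 2 * k)

def S (a m : ℕ) : ℕ := ∑ j ∈ Finset.range m, Nat.choose a j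

lemma pascal_S (a m : ℕ) : S (a+1) (m+1) + a.choose m = 2 * S a (m+1) := by
  induction m with
  | zero => simp [S]
  | succ m ih =>
    have h1 : S (a+1) (m+1+1) = S (a+1) (m+1) + (a+1).choose (m+1) := by
      simp [S, Finset.sum_range_succ]
    have h2 : S a (m+1+1) = S a (m+1) + a.choose (m+1) := by
      simp [S, Finset.sum_range_succ]
    have h3 : (a+1).choose (m+1) = a.choose m + a.choose (m+1) := Nat.choose_succ_succ a m
    omega

lemma L1 (n k : ℕ) (h : 2*k ≤ n) :
    (d n k : ℤ) = ((n:ℤ) - 3*k + 1) * S (n-k) (n-2*k+1) + k * ((n-k).choose k : ℤ) := by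
  have e1 : d n k = ∑ j ∈ range (n-2*k+1), (n-2*k+1-j) * (n-k+1).choose j := by
    rw [d, ← Finset.Ico_add_one_right_eq_Icc, Finset.sum_Ico_eq_sum_range]
    have : n + 1 - 2*k = n - 2*k + 1 := by omega
    rw [this]
    refine Finset.sum_congr rfl fun j hj => ?_
    simp only [Finset.mem_range] at hj
    congr 1
    · omega
    · congr 1; omega
  have e2 : (d n k : ℤ) =
      ∑ j ∈ range (n-2*k+1), (((n:ℤ)-k+1-j) - k) * ((n-k+1).choose j : ℤ) := by
    rw [e1]
    push_cast
    refine Finset.sum_congr rfl fun j hj => ?_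
    simp only [Finset.mem_range] at hj
    have : ((n-2*k+1-j : ℕ) : ℤ) = (n:ℤ)-2*k+1-j := by omega
    rw [this]; ring
  have e3 : ∀ j ∈ range (n-2*k+1),
      ((n:ℤ)-k+1-j) * ((n-k+1).choose j : ℤ) = ((n:ℤ)-k+1) * ((n-k).choose j : ℤ) := by
    intro j hj
    simp only [Finset.mem_range] at hj
    have hc := Nat.choose_mul_succ_eq (n-k) j
    have hcast : ((n-k+1-j : ℕ) : ℤ) = (n:ℤ)-k+1-j := by omega
    have hcast3 : ((n-k : ℕ) : ℤ) = (n:ℤ)-k := by omega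
    have := congrArg (Nat.cast : ℕ → ℤ) hc
    push_cast at this
    rw [hcast, hcast3] at this
    linear_combination -this
  have e4 : (d n k : ℤ) = ((n:ℤ)-k+1) * (S (n-k) (n-2*k+1) : ℤ)
      - k * (S (n-k+1) (n-2*k+1) : ℤ) := by
    have e4a : (d n k : ℤ) = ∑ j ∈ range (n-2*k+1),
        (((n:ℤ)-k+1) * ((n-k).choose j : ℤ) - k * ((n-k+1).choose j : ℤ)) := by
      rw [e2]
      refine Finset.sum_congr rfl fun j hj => ?_
      rw [sub_mul, e3 j hj]
    rw [e4a, Finset.sum_sub_distrib, ← Finset.mul_sum, ← Finset.mul_sum]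
    simp only [S]
    push_cast
    ring
  have e5 := pascal_S (n-k) (n-2*k)
  have e6 : (n-k).choose (n-2*k) = (n-k).choose k := by
    have : n - 2*k = (n-k) - k := by omega
    rw [this, Nat.choose_symm (by omega)]
  rw [e6] at e5
  have e5' := congrArg (Nat.cast : ℕ → ℤ) e5
  push_cast at e5'
  rw [e4]
  linear_combination (-(k:ℤ)) * e5'

lemma d_2k (k : ℕ) : d (2*k) k = 1 := by
  rw [d, Finset.Icc_self, Finset.sum_singleton]
  simp

lemma d_2k1 (k : ℕ) : d (2*k+1) k = k + 4 := by
  rw [d, Finset.sum_Icc_succ_top (by omega), Finset.Icc_self, Finset.sum_singleton]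
  rw [show 2*k+1-2*k = 1 from by omega, show 2*k-2*k = 0 from by omega,
    show 2*k+1-k+1 = k+2 from by omega, show 2*k+1-(2*k+1) = 0 from by omega,
    Nat.choose_zero_right, Nat.choose_one_right]
  omega

lemma d_2k2 (k : ℕ) : 2 * (d (2*k+2) k : ℤ) = (k:ℤ)^2 + 9*k + 24 := by
  have key : d (2*k+2) k = 3 + 2*(k+3) + (k+3).choose 2 := by
    rw [d, show 2*k+2 = 2*k+1+1 from by omega, Finset.sum_Icc_succ_top (by omega),
      Finset.sum_Icc_succ_top (by omega), Finset.Icc_self, Finset.sum_singleton]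
    rw [show 2*k-2*k = 0 from by omega, show 2*k+1-2*k = 1 from by omega,
      show 2*k+1+1-2*k = 2 from by omega, show 2*k+1+1-k+1 = k+3 from by omega,
      show 2*k+1+1-(2*k+1) = 1 from by omega, show 2*k+1+1-(2*k+1+1) = 0 from by omega,
      Nat.choose_zero_right, Nat.choose_one_right]
    omega
  have c2 := Nat.choose_succ_right_eq (k+3) 1
  rw [Nat.choose_one_right, show k+3-1 = k+2 from by omega] at c2
  have c2' := congrArg (Nat.cast : ℕ → ℤ) c2
  push_cast at c2'
  rw [key]
  push_cast
  linear_combination c2'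

theorem stmt8 (n k : ℕ) (hn : 1 ≤ n) (hk : 1 ≤ k) (h : 2 * k + 1 ≤ n) :
    2 * (k : ℤ) * ((n : ℤ) - k) * (d (n - 1) (k + 1) : ℤ) =
      (4 * (n : ℤ) ^ 2 + (4 - 13 * (k : ℤ)) * n + 11 * (k : ℤ) ^ 2 - 5 * k) *
          (d (n - 1) k : ℤ) -
        (2 * (n : ℤ) ^ 2 - 7 * (n : ℤ) * k + 6 * (k : ℤ) ^ 2) * (d n k : ℤ) := by
  rcases lt_or_ge n (2*k+3) with hsmall | hbig
  · -- n = 2k+1 or n = 2k+2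
    have : n = 2*k+1 ∨ n = 2*k+2 := by omega
    rcases this with rfl | rfl
    · have z : d (2*k+1-1) (k+1) = 0 := by
        rw [show 2*k+1-1 = 2*k from by omega, d,
          Finset.Icc_eq_empty (by omega), Finset.sum_empty]
      have d1v : d (2*k+1-1) k = 1 := by
        rw [show 2*k+1-1 = 2*k from by omega]; exact d_2k k
      have d2v : d (2*k+1) k = k + 4 := d_2k1 k
      rw [z, d1v, d2v]
      push_cast
      ring
    · have z : d (2*k+2-1) (k+1) = 0 := by
        rw [show 2*k+2-1 = 2*k+1 from by omega, d,
          Finset.Icc_eq_empty (by omega), Finset.sum_empty]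
      have d1v : d (2*k+2-1) k = k + 4 := by
        rw [show 2*k+2-1 = 2*k+1 from by omega]; exact d_2k1 k
      have hd := d_2k2 k
      rw [z, d1v]
      push_cast
      linear_combination ((k:ℤ)+4) * hd
  · -- main case : n ≥ 2k+3
    have HD1 : (d (n-1) (k+1) : ℤ) =
        ((n:ℤ)-3*k-3) * (S (n-k-2) (n-2*k-2) : ℤ) + ((k:ℤ)+1) * ((n-k-2).choose (k+1) : ℤ) := by
      have h0 := L1 (n-1) (k+1) (by omega)
      rw [show n-1-(k+1) = n-k-2 from by omega,
        show n-1-2*(k+1)+1 = n-2*k-2 from by omega] at h0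
      rw [h0, show ((n-1:ℕ):ℤ) = (n:ℤ)-1 from by omega]
      push_cast
      ring
    have HD2 : (d (n-1) k : ℤ) =
        ((n:ℤ)-3*k) * (S (n-k-1) (n-2*k) : ℤ) + (k:ℤ) * ((n-k-1).choose k : ℤ) := by
      have h0 := L1 (n-1) k (by omega)
      rw [show n-1-k = n-k-1 from by omega,
        show n-1-2*k+1 = n-2*k from by omega] at h0
      rw [h0, show ((n-1:ℕ):ℤ) = (n:ℤ)-1 from by omega]
      ring
    have HD3 : (d n k : ℤ) =
        ((n:ℤ)-3*k+1) * (S (n-k) (n-2*k+1) : ℤ) + (k:ℤ) * ((n-k).choose k : ℤ) :=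
      L1 n k (by omega)
    have HU0 : (S (n-k) (n-2*k+1) : ℤ) =
        2 * (S (n-k-1) (n-2*k) : ℤ) + ((n-k-1).choose (k-1) : ℤ) := by
      have pe := pascal_S (n-k-1) (n-2*k)
      rw [show n-k-1+1 = n-k from by omega] at pe
      have ss : S (n-k-1) (n-2*k+1) = S (n-k-1) (n-2*k) + (n-k-1).choose (n-2*k) := by
        simp [S, Finset.sum_range_succ]
      have cs : (n-k-1).choose (n-2*k) = (n-k-1).choose (k-1) := by
        rw [show n-2*k = (n-k-1)-(k-1) from by omega, Nat.choose_symm (by omega)]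
      rw [cs] at pe ss
      have : S (n-k) (n-2*k+1) = 2 * S (n-k-1) (n-2*k) + (n-k-1).choose (k-1) := by omega
      exact_mod_cast this
    have HU1 : (S (n-k-1) (n-2*k) : ℤ) =
        2 * (S (n-k-2) (n-2*k-2) : ℤ) + 2 * ((n-k-2).choose k : ℤ)
          + ((n-k-2).choose (k-1) : ℤ) := by
      have pe := pascal_S (n-k-2) (n-2*k-1)
      rw [show n-k-2+1 = n-k-1 from by omega, show n-2*k-1+1 = n-2*k from by omega] at pe
      have ss : S (n-k-2) (n-2*k) =
          S (n-k-2) (n-2*k-2) + (n-k-2).choose (n-2*k-2) + (n-k-2).choose (n-2*k-2+1) := by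
        rw [show n-2*k = n-2*k-2+1+1 from by omega]
        simp [S, Finset.sum_range_succ]
      rw [show n-2*k-2+1 = n-2*k-1 from by omega] at ss
      have cs1 : (n-k-2).choose (n-2*k-2) = (n-k-2).choose k := by
        rw [show n-2*k-2 = (n-k-2)-k from by omega, Nat.choose_symm (by omega)]
      have cs2 : (n-k-2).choose (n-2*k-1) = (n-k-2).choose (k-1) := by
        rw [show n-2*k-1 = (n-k-2)-(k-1) from by omega, Nat.choose_symm (by omega)]
      rw [cs2] at pe
      rw [cs1, cs2] at ss
      have : S (n-k-1) (n-2*k) =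
          2 * S (n-k-2) (n-2*k-2) + 2 * (n-k-2).choose k + (n-k-2).choose (k-1) := by omega
      exact_mod_cast this
    have P1n : (n-k-1).choose k = (n-k-2).choose (k-1) + (n-k-2).choose k := by
      have p := Nat.choose_succ_succ (n-k-2) (k-1)
      simp only [Nat.succ_eq_add_one] at p
      rw [show n-k-2+1 = n-k-1 from by omega, show k-1+1 = k from by omega] at p
      exact p
    have HP1 : ((n-k-1).choose k : ℤ) = ((n-k-2).choose (k-1) : ℤ) + ((n-k-2).choose k : ℤ) := by
      exact_mod_cast P1n
    have P3n : (n-k).choose k = (n-k-1).choose (k-1) + (n-k-1).choose k := by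
      have p := Nat.choose_succ_succ (n-k-1) (k-1)
      simp only [Nat.succ_eq_add_one] at p
      rw [show n-k-1+1 = n-k from by omega, show k-1+1 = k from by omega] at p
      exact p
    have HP3 : ((n-k).choose k : ℤ) = ((n-k-1).choose (k-1) : ℤ) + ((n-k-1).choose k : ℤ) := by
      exact_mod_cast P3n
    have HR1 : ((n-k-2).choose (k+1) : ℤ) * ((k:ℤ)+1) =
        ((n-k-2).choose k : ℤ) * ((n:ℤ)-2*k-2) := by
      have r := Nat.choose_succ_right_eq (n-k-2) k
      rw [show n-k-2-k = n-2*k-2 from by omega] at r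
      have r' := congrArg (Nat.cast : ℕ → ℤ) r
      push_cast at r'
      rw [show ((n-2*k-2:ℕ):ℤ) = (n:ℤ)-2*k-2 from by omega] at r'
      exact r'
    have HR2 : ((n-k-2).choose k : ℤ) * (k:ℤ) =
        ((n-k-2).choose (k-1) : ℤ) * ((n:ℤ)-2*k-1) := by
      have r := Nat.choose_succ_right_eq (n-k-2) (k-1)
      rw [show k-1+1 = k from by omega, show n-k-2-(k-1) = n-2*k-1 from by omega] at r
      have r' := congrArg (Nat.cast : ℕ → ℤ) r
      push_cast at r'
      rw [show ((n-2*k-1:ℕ):ℤ) = (n:ℤ)-2*k-1 from by omega] at r'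
      exact r'
    have HR3 : ((n-k-2).choose (k-1) : ℤ) * ((n:ℤ)-k-1) =
        ((n-k-1).choose (k-1) : ℤ) * ((n:ℤ)-2*k) := by
      have r := Nat.choose_mul_succ_eq (n-k-2) (k-1)
      rw [show n-k-2+1 = n-k-1 from by omega, show n-k-1-(k-1) = n-2*k from by omega] at r
      have r' := congrArg (Nat.cast : ℕ → ℤ) r
      push_cast at r'
      rw [show ((n-k-1:ℕ):ℤ) = (n:ℤ)-k-1 from by omega,
        show ((n-2*k:ℕ):ℤ) = (n:ℤ)-2*k from by omega] at r'
      exact r'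
    linear_combination
      (2*(k:ℤ)*((n:ℤ)-k)) * HD1
      - (4*(n:ℤ)^2 + (4-13*(k:ℤ))*n + 11*(k:ℤ)^2 - 5*k) * HD2
      + (2*(n:ℤ)^2 - 7*(n:ℤ)*k + 6*(k:ℤ)^2) * HD3
      + ((2*(n:ℤ)^2 - 7*(n:ℤ)*k + 6*(k:ℤ)^2) * ((n:ℤ)-3*k+1)) * HU0
      + (2*(2*(n:ℤ)^2 - 7*(n:ℤ)*k + 6*(k:ℤ)^2) * ((n:ℤ)-3*k+1)
          - (4*(n:ℤ)^2 + (4-13*(k:ℤ))*n + 11*(k:ℤ)^2 - 5*k) * ((n:ℤ)-3*k)) * HU1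
      + ((k:ℤ) * ((2*(n:ℤ)^2 - 7*(n:ℤ)*k + 6*(k:ℤ)^2)
          - (4*(n:ℤ)^2 + (4-13*(k:ℤ))*n + 11*(k:ℤ)^2 - 5*k))) * HP1
      + ((k:ℤ) * (2*(n:ℤ)^2 - 7*(n:ℤ)*k + 6*(k:ℤ)^2)) * HP3
      + (2*(k:ℤ)*((n:ℤ)-k)) * HR1
      + (-2*(n:ℤ)^2 - 2*n + 8*(n:ℤ)*k + 3*(k:ℤ) - 7*(k:ℤ)^2) * HR2
      + (-2*(n:ℤ)^2 - 2*n + 7*(n:ℤ)*k + 3*(k:ℤ) - 6*(k:ℤ)^2) * HR3
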